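/- Let σ be a positive definite d×d density matrix and let T′(ρ) = Σ_{j=1}^m K_j ρ K_j† be a completely positive map given by Kraus operators K_j, satisfying KMS detailed balance with respect to σ, and such that O := T′†(I) = Σ_j K_j† K_j satisfies O ≤ I in the positive semidefinite order. Define the rejection Kraus operator K := (σ^{1/2}(I − O)σ^{1/2})^{1/2} σ^{−1/2}, where (·)^{1/2} denotes the positive semidefinite square root. Then the map M(ρ) := T′(ρ) + K ρ K† is trace-preserving and satisfies KMS detailed balance with respect to σ (hence M(σ) = σ). -/

import Mathlib

open scoped Matrix.Norms.L2Operator ComplexOrder Classical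
open Matrix

/-- Positive semidefinite square root (extended by `0` off the PSD matrices). -/
noncomputable def psdSqrt {d : ℕ} (A : Matrix (Fin d) (Fin d) ℂ) : Matrix (Fin d) (Fin d) ℂ :=
  if h : A.PosSemidef then
    (h.1.eigenvectorUnitary : Matrix (Fin d) (Fin d) ℂ) *
      diagonal ((↑) ∘ Real.sqrt ∘ h.1.eigenvalues) *
      (star h.1.eigenvectorUnitary : Matrix (Fin d) (Fin d) ℂ)
  else 0

/-- The KMS inner product `⟨X, Y⟩_{σ,1/2} = Tr(Xᴴ σ^{1/2} Y σ^{1/2})`, expressed in terms of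
`s = σ^{1/2}`. -/
noncomputable def kmsInner {d : ℕ} (s X Y : Matrix (Fin d) (Fin d) ℂ) : ℂ :=
  (Xᴴ * s * Y * s).trace

/-- `Td` is the Hilbert–Schmidt adjoint of `T`. -/
def IsHSAdjoint {d : ℕ}
    (T Td : Matrix (Fin d) (Fin d) ℂ →ₗ[ℂ] Matrix (Fin d) (Fin d) ℂ) : Prop :=
  ∀ X Y : Matrix (Fin d) (Fin d) ℂ, ((Td X)ᴴ * Y).trace = (Xᴴ * T Y).trace

/-- `T` satisfies KMS detailed balance with respect to `σ`. -/
def KMSDetailedBalance {d : ℕ} (σ : Matrix (Fin d) (Fin d) ℂ)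
    (T : Matrix (Fin d) (Fin d) ℂ →ₗ[ℂ] Matrix (Fin d) (Fin d) ℂ) : Prop :=
  ∀ Td, IsHSAdjoint T Td →
    ∀ X Y : Matrix (Fin d) (Fin d) ℂ,
      kmsInner (psdSqrt σ) X (Td Y) = kmsInner (psdSqrt σ) (Td X) Y

/-- The conjugation map `ρ ↦ K ρ Kᴴ` as a linear map. -/
noncomputable def sandwich {d : ℕ} (K : Matrix (Fin d) (Fin d) ℂ) :
    Matrix (Fin d) (Fin d) ℂ →ₗ[ℂ] Matrix (Fin d) (Fin d) ℂ where
  toFun ρ := K * ρ * Kᴴ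
  map_add' X Y := by simp [Matrix.mul_add, Matrix.add_mul]
  map_smul' c X := by simp [Matrix.mul_smul, Matrix.smul_mul]

/-- The completely positive map `ρ ↦ Σ_j K_j ρ K_jᴴ` given by Kraus operators. -/
noncomputable def krausMap {d m : ℕ} (K : Fin m → Matrix (Fin d) (Fin d) ℂ) :
    Matrix (Fin d) (Fin d) ℂ →ₗ[ℂ] Matrix (Fin d) (Fin d) ℂ :=
  ∑ j : Fin m, sandwich (K j)

lemma trace_conj_self_eq_zero {d : ℕ} (X : Matrix (Fin d) (Fin d) ℂ)
    (h : (Xᴴ * X).trace = 0) : X = 0 := by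
  have h1 : ∑ i, ∑ j, Complex.normSq (X j i) = 0 := by
    have : (Xᴴ * X).trace = ((∑ i, ∑ j, Complex.normSq (X j i) : ℝ) : ℂ) := by
      simp [Matrix.trace, Matrix.diag, Matrix.mul_apply, Matrix.conjTranspose_apply,
        Complex.normSq_eq_conj_mul_self]
    rw [h] at this
    exact_mod_cast this.symm
  have h2 : ∀ i ∈ Finset.univ, ∀ j ∈ Finset.univ, Complex.normSq (X j i) = 0 := by
    have := (Finset.sum_eq_zero_iff_of_nonneg (fun i _ => Finset.sum_nonneg
      (fun j _ => Complex.normSq_nonneg _))).mp h1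
    intro i hi j hj
    exact (Finset.sum_eq_zero_iff_of_nonneg (fun j _ => Complex.normSq_nonneg _)).mp
      (this i hi) j hj
  ext i j
  simpa using Complex.normSq_eq_zero.mp (h2 j (Finset.mem_univ _) i (Finset.mem_univ _))

lemma sandwich_apply {d : ℕ} (K X : Matrix (Fin d) (Fin d) ℂ) :
    sandwich K X = K * X * Kᴴ := rfl

lemma krausMap_apply {d m : ℕ} (K : Fin m → Matrix (Fin d) (Fin d) ℂ)
    (X : Matrix (Fin d) (Fin d) ℂ) :
    krausMap K X = ∑ j : Fin m, K j * X * (K j)ᴴ := by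
  simp [krausMap, sandwich_apply]

lemma sandwich_hs_adjoint {d : ℕ} (Kk : Matrix (Fin d) (Fin d) ℂ) :
    IsHSAdjoint (sandwich Kk) (sandwich Kkᴴ) := by
  intro X Y
  simp only [sandwich_apply, conjTranspose_mul, conjTranspose_conjTranspose,
    Matrix.mul_assoc]
  rw [trace_mul_comm]
  simp only [Matrix.mul_assoc]

lemma krausMap_hs_adjoint {d m : ℕ} (K : Fin m → Matrix (Fin d) (Fin d) ℂ) :
    IsHSAdjoint (krausMap K) (krausMap (fun j => (K j)ᴴ)) := by
  intro X Y
  simp only [krausMap, LinearMap.sum_apply, Matrix.conjTranspose_sum,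
    Finset.sum_mul, Matrix.mul_sum, trace_sum]
  exact Finset.sum_congr rfl fun j _ => sandwich_hs_adjoint (K j) X Y

lemma hs_adjoint_add {d : ℕ} {T1 T2 Td1 Td2 :
    Matrix (Fin d) (Fin d) ℂ →ₗ[ℂ] Matrix (Fin d) (Fin d) ℂ}
    (h1 : IsHSAdjoint T1 Td1) (h2 : IsHSAdjoint T2 Td2) :
    IsHSAdjoint (T1 + T2) (Td1 + Td2) := by
  intro X Y
  simp only [LinearMap.add_apply, Matrix.conjTranspose_add, Matrix.add_mul,
    Matrix.mul_add, trace_add, h1 X Y, h2 X Y]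

lemma hs_adjoint_unique {d : ℕ} {T Td Td' :
    Matrix (Fin d) (Fin d) ℂ →ₗ[ℂ] Matrix (Fin d) (Fin d) ℂ}
    (h : IsHSAdjoint T Td) (h' : IsHSAdjoint T Td') : Td = Td' := by
  ext X : 1
  have key : ∀ Y, ((Td X - Td' X)ᴴ * Y).trace = 0 := by
    intro Y
    simp only [Matrix.conjTranspose_sub, Matrix.sub_mul, trace_sub, h X Y, h' X Y, sub_self]
  exact sub_eq_zero.mp (trace_conj_self_eq_zero _ (key (Td X - Td' X)))

lemma psdSqrt_posSemidef {d : ℕ} {A : Matrix (Fin d) (Fin d) ℂ} (h : A.PosSemidef) :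
    (psdSqrt A).PosSemidef := by
  rw [psdSqrt, dif_pos h]
  have hD : (diagonal ((↑) ∘ Real.sqrt ∘ h.1.eigenvalues) :
      Matrix (Fin d) (Fin d) ℂ).PosSemidef := by
    rw [posSemidef_diagonal_iff]
    intro i
    exact Complex.zero_le_real.mpr (Real.sqrt_nonneg _)
  have := hD.mul_mul_conjTranspose_same (h.1.eigenvectorUnitary : Matrix (Fin d) (Fin d) ℂ)
  rwa [← Matrix.star_eq_conjTranspose] at this

lemma psdSqrt_mul_self {d : ℕ} {A : Matrix (Fin d) (Fin d) ℂ} (h : A.PosSemidef) :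
    psdSqrt A * psdSqrt A = A := by
  rw [psdSqrt, dif_pos h]
  have hU : (star h.1.eigenvectorUnitary : Matrix (Fin d) (Fin d) ℂ) *
      (h.1.eigenvectorUnitary : Matrix (Fin d) (Fin d) ℂ) = 1 :=
    Unitary.coe_star_mul_self _
  have hsp := h.1.spectral_theorem
  rw [Unitary.conjStarAlgAut_apply] at hsp
  simp only [Matrix.mul_assoc]
  rw [← Matrix.mul_assoc (star h.1.eigenvectorUnitary : Matrix (Fin d) (Fin d) ℂ), hU,
    Matrix.one_mul, ← Matrix.mul_assoc (diagonal _), diagonal_mul_diagonal]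
  conv_rhs => rw [hsp]
  rw [Matrix.mul_assoc]
  congr 3
  funext i
  simp only [Function.comp_apply]
  rw [← Complex.ofReal_mul, Real.mul_self_sqrt (h.eigenvalues_nonneg i)]
  rfl

/-- trace-preserving completion of a detailed-balanced completely positive map by
a rejection branch, preserving exact KMS detailed balance (hence fixing σ). -/
theorem rejection_completion_detailed_balance
    {d m : ℕ} (σ : Matrix (Fin d) (Fin d) ℂ) (hσ : σ.PosDef) (hσtr : σ.trace = 1)
    (K : Fin m → Matrix (Fin d) (Fin d) ℂ)
    (hdb : KMSDetailedBalance σ (krausMap K))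
    (hO : (1 - ∑ j : Fin m, (K j)ᴴ * K j).PosSemidef) :
    let Krej : Matrix (Fin d) (Fin d) ℂ :=
      psdSqrt (psdSqrt σ * (1 - ∑ j : Fin m, (K j)ᴴ * K j) * psdSqrt σ) * (psdSqrt σ)⁻¹
    let M : Matrix (Fin d) (Fin d) ℂ →ₗ[ℂ] Matrix (Fin d) (Fin d) ℂ :=
      krausMap K + sandwich Krej
    (∀ X : Matrix (Fin d) (Fin d) ℂ, (M X).trace = X.trace) ∧
      KMSDetailedBalance σ M ∧ M σ = σ := by
  intro Krej M
  set O : Matrix (Fin d) (Fin d) ℂ := ∑ j : Fin m, (K j)ᴴ * K j with hO_def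
  set s : Matrix (Fin d) (Fin d) ℂ := psdSqrt σ with hs_def
  have hsq : s = psdSqrt σ := rfl
  have hsPSD : s.PosSemidef := by rw [hsq]; exact psdSqrt_posSemidef hσ.posSemidef
  have hsH : sᴴ = s := hsPSD.isHermitian
  have hss : s * s = σ := by rw [hsq]; exact psdSqrt_mul_self hσ.posSemidef
  have hdet : IsUnit s.det := by
    have h1 : IsUnit σ.det := hσ.det_pos.ne'.isUnit
    rw [← hss, det_mul] at h1
    exact (IsUnit.mul_iff.mp h1).1
  have hsinv : s * s⁻¹ = 1 := mul_nonsing_inv s hdet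
  have hinvs : s⁻¹ * s = 1 := nonsing_inv_mul s hdet
  have hinvH : s⁻¹ᴴ = s⁻¹ := by rw [conjTranspose_nonsing_inv, hsH]
  set A : Matrix (Fin d) (Fin d) ℂ := s * (1 - O) * s with hA_def
  have hA : A.PosSemidef := by
    have := hO.mul_mul_conjTranspose_same s
    rwa [hsH] at this
  set B : Matrix (Fin d) (Fin d) ℂ := psdSqrt A with hB_def
  have hBsq : B = psdSqrt A := rfl
  have hBPSD : B.PosSemidef := by rw [hBsq]; exact psdSqrt_posSemidef hA
  have hBH : Bᴴ = B := hBPSD.isHermitian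
  have hBB : B * B = A := by rw [hBsq]; exact psdSqrt_mul_self hA
  have hKrej : Krej = B * s⁻¹ := rfl
  have hKs : Krej * s = B := by
    rw [hKrej, Matrix.mul_assoc, hinvs, Matrix.mul_one]
  have hKH : Krejᴴ = s⁻¹ * B := by
    rw [hKrej, conjTranspose_mul, hinvH, hBH]
  have hsKH : s * Krejᴴ = B := by
    rw [hKH, ← Matrix.mul_assoc, hsinv, Matrix.one_mul]
  have hKK : Krejᴴ * Krej = 1 - O := by
    have h1 : Krejᴴ * Krej = s⁻¹ * (B * B) * s⁻¹ := by rw [hKH, hKrej]; noncomm_ring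
    rw [h1, hBB, hA_def]
    have h2 : s⁻¹ * (s * (1 - O) * s) * s⁻¹ = (s⁻¹ * s) * (1 - O) * (s * s⁻¹) := by
      noncomm_ring
    rw [h2, hinvs, hsinv, Matrix.one_mul, Matrix.mul_one]
  have hMapp : ∀ X, M X = (∑ j : Fin m, K j * X * (K j)ᴴ) + Krej * X * Krejᴴ := by
    intro X
    show krausMap K X + sandwich Krej X = _
    rw [krausMap_apply, sandwich_apply]
  -- trace preservation
  have hTP : ∀ X : Matrix (Fin d) (Fin d) ℂ, (M X).trace = X.trace := by
    intro X
    rw [hMapp, trace_add, trace_sum]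
    have h1 : ∀ j : Fin m, (K j * X * (K j)ᴴ).trace = ((K j)ᴴ * K j * X).trace := fun j =>
      trace_mul_cycle (K j) X (K j)ᴴ
    have h2 : (Krej * X * Krejᴴ).trace = ((1 - O) * X).trace := by
      rw [trace_mul_cycle, hKK]
    rw [h2]
    simp_rw [h1]
    rw [← trace_sum, ← Finset.sum_mul, ← hO_def, ← trace_add, ← Matrix.add_mul]
    simp
  refine ⟨hTP, ?_⟩
  -- explicit adjoint
  set Md : Matrix (Fin d) (Fin d) ℂ →ₗ[ℂ] Matrix (Fin d) (Fin d) ℂ :=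
    krausMap (fun j => (K j)ᴴ) + sandwich Krejᴴ with hMd_def
  have hadj : IsHSAdjoint M Md :=
    hs_adjoint_add (krausMap_hs_adjoint K) (sandwich_hs_adjoint Krej)
  -- KMS self-adjointness of Md
  have hkmsMd : ∀ X Y : Matrix (Fin d) (Fin d) ℂ,
      kmsInner s X (Md Y) = kmsInner s (Md X) Y := by
    intro X Y
    have hpart1 : kmsInner s X (krausMap (fun j => (K j)ᴴ) Y)
        = kmsInner s (krausMap (fun j => (K j)ᴴ) X) Y :=
      hdb _ (krausMap_hs_adjoint K) X Y
    have hpart2 : kmsInner s X (sandwich Krejᴴ Y) = kmsInner s (sandwich Krejᴴ X) Y := by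
      unfold kmsInner
      rw [sandwich_apply, sandwich_apply, conjTranspose_conjTranspose]
      have hL : Xᴴ * s * (Krejᴴ * Y * Krej) * s = Xᴴ * (s * Krejᴴ) * Y * (Krej * s) := by
        noncomm_ring
      have hR1 : (Krejᴴ * X * Krej)ᴴ * s * Y * s
          = Krejᴴ * (Xᴴ * (Krej * s) * Y * s) := by
        simp only [conjTranspose_mul, conjTranspose_conjTranspose]
        noncomm_ring
      have hR2 : (Xᴴ * (Krej * s) * Y * s) * Krejᴴ
          = Xᴴ * (Krej * s) * Y * (s * Krejᴴ) := by noncomm_ring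
      have hleft : (Xᴴ * s * (Krejᴴ * Y * Krej) * s).trace = (Xᴴ * B * Y * B).trace := by
        rw [hL, hsKH, hKs]
      have hright : ((Krejᴴ * X * Krej)ᴴ * s * Y * s).trace = (Xᴴ * B * Y * B).trace := by
        rw [hR1, trace_mul_comm, hR2, hKs, hsKH]
      rw [hleft, hright]
    rw [hMd_def]
    simp only [LinearMap.add_apply]
    unfold kmsInner at hpart1 hpart2 ⊢
    simp only [Matrix.conjTranspose_add, Matrix.add_mul, Matrix.mul_add, trace_add]
    rw [hpart1, hpart2]
  have hKMS : KMSDetailedBalance σ M := by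
    intro Td hTd X Y
    rw [hs_adjoint_unique hTd hadj]
    exact hkmsMd X Y
  refine ⟨hKMS, ?_⟩
  -- fixed point
  have hMd1 : Md 1 = 1 := by
    rw [hMd_def]
    simp only [LinearMap.add_apply, krausMap_apply, sandwich_apply,
      conjTranspose_conjTranspose, Matrix.mul_one]
    rw [hKK, ← hO_def]
    abel
  have key : ∀ X : Matrix (Fin d) (Fin d) ℂ, (Xᴴ * σ).trace = (Xᴴ * M σ).trace := by
    intro X
    have h1 := hkmsMd X 1
    rw [hMd1] at h1
    unfold kmsInner at h1
    simp only [Matrix.mul_one] at h1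
    rw [Matrix.mul_assoc Xᴴ s s, Matrix.mul_assoc (Md X)ᴴ s s, hss] at h1
    rw [h1]
    exact hadj X σ
  have hzero : ((M σ - σ)ᴴ * (M σ - σ)).trace = 0 := by
    rw [Matrix.mul_sub, trace_sub, ← key (M σ - σ), sub_self]
  exact sub_eq_zero.mp (trace_conj_self_eq_zero _ hzero)
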